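/- The integral over α from 0 to π of (sin α / 2) multiplied by L(α) equals 3/2 − sin(π·log₂3)/π − sin(2π·log₂3)/(2π), where L(α) is the piecewise function defined by: L(α) = 3/2 + 3α/(2π) for 0 ≤ α ≤ π·log₂(9/8); L(α) = log₂3 + α/π for π·log₂(9/8) < α ≤ π·log₂(4/3); L(α) = 2 for π·log₂(4/3) < α < π·log₂(3/2); L(α) = log₂3 + 1 − α/π for π·log₂(3/2) ≤ α < π·log₂(16/9); and L(α) = 3 − 3α/(2π) for π·log₂(16/9) ≤ α ≤ π. -/

import Mathlib

open Real

/-- Average codeword length of the piecewise Huffman encoding at angle `α`. -/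
noncomputable def L (α : ℝ) : ℝ :=
  if α ≤ π * logb 2 (9/8) then 3/2 + 3*α/(2*π)
  else if α ≤ π * logb 2 (4/3) then logb 2 3 + α/π
  else if α < π * logb 2 (3/2) then 2
  else if α < π * logb 2 (16/9) then logb 2 3 + 1 - α/π
  else 3 - 3*α/(2*π)

private lemma integral_sin_linear (p q x y : ℝ) :
    ∫ α in x..y, Real.sin α / 2 * (p + q * α)
      = (q * Real.sin y - (p + q*y) * Real.cos y) / 2
        - (q * Real.sin x - (p + q*x) * Real.cos x) / 2 := by
  have h : ∀ t : ℝ, HasDerivAt (fun α => (q * Real.sin α - (p + q*α) * Real.cos α) / 2)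
      (Real.sin t / 2 * (p + q * t)) t := by
    intro t
    have h1 := (Real.hasDerivAt_sin t).const_mul q
    have h2 : HasDerivAt (fun α : ℝ => p + q * α) q t := by
      simpa using ((hasDerivAt_id t).const_mul q).const_add p
    have h3 := h2.mul (Real.hasDerivAt_cos t)
    have h4 := (h1.sub h3).div_const 2
    refine h4.congr_deriv ?_
    ring
  rw [intervalIntegral.integral_eq_sub_of_hasDerivAt (fun t _ => h t)
    ((Continuous.intervalIntegrable (by continuity) x y))]

private lemma congr_piece {x y p q : ℝ} (hxy : x ≤ y)
    (h : ∀ α ∈ Set.Ioc x y, L α = p + q*α) :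
    (∫ α in x..y, Real.sin α / 2 * L α) = ∫ α in x..y, Real.sin α / 2 * (p + q*α) := by
  apply intervalIntegral.integral_congr_ae
  filter_upwards with α hα
  rw [Set.uIoc_of_le hxy] at hα
  rw [h α hα]

private lemma integrable_piece {x y p q : ℝ} (hxy : x ≤ y)
    (h : ∀ α ∈ Set.Ioc x y, L α = p + q*α) :
    IntervalIntegrable (fun α => Real.sin α / 2 * L α) MeasureTheory.volume x y := by
  have hc : IntervalIntegrable (fun α => Real.sin α / 2 * (p + q*α))
      MeasureTheory.volume x y := Continuous.intervalIntegrable (by continuity) x y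
  rw [intervalIntegrable_iff] at hc ⊢
  apply hc.congr_fun _ measurableSet_uIoc
  intro α hα
  rw [Set.uIoc_of_le hxy] at hα
  simp only [h α hα]

set_option maxHeartbeats 2000000 in
theorem average_communication_cost :
    ∫ α in (0:ℝ)..π, (Real.sin α / 2) * L α
      = 3/2 - Real.sin (π * logb 2 3) / π - Real.sin (2*π * logb 2 3) / (2*π) := by
  have hπ : (0:ℝ) < π := Real.pi_pos
  have h2 : (0:ℝ) < Real.log 2 := Real.log_pos (by norm_num)
  set c : ℝ := logb 2 3 with hc
  have hc32 : (3:ℝ)/2 < c := by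
    have h89 : Real.log 8 < Real.log 9 := Real.log_lt_log (by norm_num) (by norm_num)
    have e8 : Real.log 8 = 3 * Real.log 2 := by
      rw [show (8:ℝ)=2^3 by norm_num, Real.log_pow]; push_cast; ring
    have e9 : Real.log 9 = 2 * Real.log 3 := by
      rw [show (9:ℝ)=3^2 by norm_num, Real.log_pow]; push_cast; ring
    rw [hc, Real.logb, lt_div_iff₀ h2]; nlinarith
  have hc53 : c < 5/3 := by
    have h' : Real.log 27 < Real.log 32 := Real.log_lt_log (by norm_num) (by norm_num)
    have e1 : Real.log 27 = 3 * Real.log 3 := by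
      rw [show (27:ℝ)=3^3 by norm_num, Real.log_pow]; push_cast; ring
    have e2 : Real.log 32 = 5 * Real.log 2 := by
      rw [show (32:ℝ)=2^5 by norm_num, Real.log_pow]; push_cast; ring
    rw [hc, Real.logb, div_lt_iff₀ h2]; nlinarith
  have l98 : logb 2 (9/8) = 2 * c - 3 := by
    rw [show (9:ℝ)/8 = 3^2/2^3 by norm_num, Real.logb_div (by norm_num) (by norm_num)]
    simp [Real.logb_pow, Real.logb_self_eq_one, hc]
  have l43 : logb 2 (4/3) = 2 - c := by
    rw [show (4:ℝ)/3 = 2^2/3 by norm_num, Real.logb_div (by norm_num) (by norm_num)]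
    simp [Real.logb_pow, Real.logb_self_eq_one, hc]
  have l32 : logb 2 (3/2) = c - 1 := by
    rw [Real.logb_div (by norm_num) (by norm_num)]
    simp [Real.logb_self_eq_one, hc]
  have l169 : logb 2 (16/9) = 4 - 2*c := by
    rw [show (16:ℝ)/9 = 2^4/3^2 by norm_num, Real.logb_div (by norm_num) (by norm_num)]
    simp [Real.logb_pow, Real.logb_self_eq_one, hc]
  set b1 : ℝ := π * logb 2 (9/8) with hb1
  set b2 : ℝ := π * logb 2 (4/3) with hb2
  set b3 : ℝ := π * logb 2 (3/2) with hb3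
  set b4 : ℝ := π * logb 2 (16/9) with hb4
  have eb1 : b1 = 2*π*c - 3*π := by rw [hb1, l98]; ring
  have eb2 : b2 = 2*π - π*c := by rw [hb2, l43]; ring
  have eb3 : b3 = π*c - π := by rw [hb3, l32]; ring
  have eb4 : b4 = 4*π - 2*π*c := by rw [hb4, l169]; ring
  have h0b1 : (0:ℝ) ≤ b1 := by rw [eb1]; nlinarith
  have hb1b2 : b1 ≤ b2 := by rw [eb1, eb2]; nlinarith
  have hb2b3 : b2 ≤ b3 := by rw [eb2, eb3]; nlinarith
  have hb3b4 : b3 ≤ b4 := by rw [eb3, eb4]; nlinarith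
  have hb4π : b4 ≤ π := by rw [eb4]; nlinarith
  -- branch descriptions
  have h1 : ∀ α ∈ Set.Ioc (0:ℝ) b1, L α = 3/2 + (3/(2*π))*α := by
    intro α hα
    simp only [L, ← hb1, ← hb2, ← hb3, ← hb4]
    rw [if_pos hα.2]; ring
  have h2' : ∀ α ∈ Set.Ioc b1 b2, L α = c + (1/π)*α := by
    intro α hα
    simp only [L, ← hb1, ← hb2, ← hb3, ← hb4]
    rw [if_neg (not_le.mpr hα.1), if_pos hα.2, ← hc]; ring
  have h3' : ∀ α ∈ Set.Ioc b2 b3, L α = 2 + 0*α := by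
    intro α hα
    simp only [L, ← hb1, ← hb2, ← hb3, ← hb4]
    rw [if_neg (by push_neg; linarith [hα.1]), if_neg (not_le.mpr hα.1)]
    rcases lt_or_eq_of_le hα.2 with h | h
    · rw [if_pos h]; ring
    · have hlt : b3 < b4 := by rw [eb3, eb4]; nlinarith
      rw [if_neg (by simp [h]), if_pos (by rw [h]; exact hlt), h, eb3]
      field_simp; ring
  have h4' : ∀ α ∈ Set.Ioc b3 b4, L α = (c+1) + (-(1/π))*α := by
    intro α hα
    simp only [L, ← hb1, ← hb2, ← hb3, ← hb4]
    rw [if_neg (by push_neg; linarith [hα.1]), if_neg (by push_neg; linarith [hα.1]),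
      if_neg (by push_neg; linarith [hα.1])]
    rcases lt_or_eq_of_le hα.2 with h | h
    · rw [if_pos h, hc]; field_simp; ring
    · rw [if_neg (by simp [h]), h, eb4]
      field_simp; ring
  have h5' : ∀ α ∈ Set.Ioc b4 π, L α = 3 + (-(3/(2*π)))*α := by
    intro α hα
    simp only [L, ← hb1, ← hb2, ← hb3, ← hb4]
    rw [if_neg (by push_neg; linarith [hα.1]), if_neg (by push_neg; linarith [hα.1]),
      if_neg (by push_neg; linarith [hα.1]), if_neg (by push_neg; linarith [hα.1])]
    field_simp; ring
  have i1 := integrable_piece h0b1 h1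
  have i2 := integrable_piece hb1b2 h2'
  have i3 := integrable_piece hb2b3 h3'
  have i4 := integrable_piece hb3b4 h4'
  have i5 := integrable_piece hb4π h5'
  have hsplit : (∫ α in (0:ℝ)..π, Real.sin α / 2 * L α)
      = (∫ α in (0:ℝ)..b1, Real.sin α / 2 * L α) + (∫ α in b1..b2, Real.sin α / 2 * L α)
        + (∫ α in b2..b3, Real.sin α / 2 * L α) + (∫ α in b3..b4, Real.sin α / 2 * L α)
        + (∫ α in b4..π, Real.sin α / 2 * L α) := by
    rw [← intervalIntegral.integral_add_adjacent_intervals i1 (i2.trans (i3.trans (i4.trans i5))),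
      ← intervalIntegral.integral_add_adjacent_intervals i2 (i3.trans (i4.trans i5)),
      ← intervalIntegral.integral_add_adjacent_intervals i3 (i4.trans i5),
      ← intervalIntegral.integral_add_adjacent_intervals i4 i5]
    ring
  rw [hsplit, congr_piece h0b1 h1, congr_piece hb1b2 h2', congr_piece hb2b3 h3',
    congr_piece hb3b4 h4', congr_piece hb4π h5',
    integral_sin_linear, integral_sin_linear, integral_sin_linear, integral_sin_linear,
    integral_sin_linear]
  rw [eb1, eb2, eb3, eb4]
  have s4 : Real.sin (4*π) = 0 := by
    rw [show (4:ℝ)*π = 2*π + 2*π by ring]; simp [Real.sin_add]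
  have c4 : Real.cos (4*π) = 1 := by
    rw [show (4:ℝ)*π = 2*π + 2*π by ring]; simp [Real.cos_add]
  have s3 : Real.sin (3*π) = 0 := by
    rw [show (3:ℝ)*π = π + 2*π by ring]; simp [Real.sin_add]
  have c3 : Real.cos (3*π) = -1 := by
    rw [show (3:ℝ)*π = π + 2*π by ring]; simp [Real.cos_add]
  rw [show (2:ℝ)*π*c - 3*π = 2*π*c - 3*π by ring]
  rw [Real.sin_sub, Real.cos_sub, s3, c3]
  rw [show (2:ℝ)*π - π*c = 2*π - π*c by ring]
  rw [Real.sin_sub (2*π) (π*c), Real.cos_sub (2*π) (π*c), Real.sin_two_pi, Real.cos_two_pi]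
  rw [Real.sin_sub (π*c) π, Real.cos_sub (π*c) π, Real.sin_pi, Real.cos_pi]
  rw [Real.sin_sub (4*π) (2*π*c), Real.cos_sub (4*π) (2*π*c), s4, c4]
  simp only [Real.sin_zero, Real.cos_zero, Real.sin_pi, Real.cos_pi]
  field_simp
  ring
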